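/- For every η ∈ Ã and every ζ ∈ A: exp( i·S(η) − i·θ(η, ζ−η) − (i/2)·B(ζ−η, ζ−η) − (1/2)·g((ζ−η)^I, (ζ−η)^I) − (i/2)·g((ζ−η)^R, (ζ−η)^I) ) = exp( i·S(ζ^R) − i·θ(ζ^R, J·ζ^I) − (i/2)·B(J·ζ^I, J·ζ^I) − (1/2)·g(ζ^I, ζ^I) ). In particular the left-hand side is independent of the choice of η ∈ Ã. -/

import Mathlib

/-- With `V ⊆ H` a closed Lagrangian subspace, `Ã := η₀ + V ⊆ A`,
`S` satisfying the affine-action relation on `Ã`, and the unique decompositions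
`ζ − η = xR + J·xI` (`xR, xI ∈ V`) and `ζ = ζR + J·ζI` (`ζR ∈ Ã`, `ζI ∈ V`),
one has, for every `η ∈ Ã` and `ζ ∈ A`,
`exp( i·S(η) − i·θ(η, ζ−η) − (i/2)·B(ζ−η, ζ−η) − (1/2)·g((ζ−η)^I,(ζ−η)^I)
 − (i/2)·g((ζ−η)^R,(ζ−η)^I) )
 = exp( i·S(ζ^R) − i·θ(ζ^R, J·ζ^I) − (i/2)·B(J·ζ^I, J·ζ^I) − (1/2)·g(ζ^I,ζ^I) )`;
in particular the left-hand side is independent of the choice of `η ∈ Ã`. -/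
theorem statement5
    {H A : Type*} [NormedAddCommGroup H] [InnerProductSpace ℂ H] [CompleteSpace H]
    [AddTorsor H A]
    (θ : A → H → ℝ) (hθ : ∀ η : A, IsLinearMap ℝ (θ η))
    (B : H → H → ℝ)
    (hB₁ : ∀ y : H, IsLinearMap ℝ (fun x => B x y))
    (hB₂ : ∀ x : H, IsLinearMap ℝ (B x))
    (hθB : ∀ (η : A) (ξ ξ' : H), θ (ξ +ᵥ η) ξ' = θ η ξ' + B ξ ξ')
    (hωB : ∀ ξ ξ' : H,
      (1/2 : ℝ) * (inner ℂ ξ ξ' : ℂ).im = (1/2 : ℝ) * (B ξ ξ' - B ξ' ξ))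
    (V : Submodule ℝ H) (hVclosed : IsClosed (V : Set H))
    (hVlag : ∀ x : H, x ∈ V ↔ ∀ v ∈ V, (1/2 : ℝ) * (inner ℂ x v : ℂ).im = 0)
    (η₀ : A)
    (S : A → ℝ)
    (hS : ∀ η η' : A, (∃ v ∈ V, η = v +ᵥ η₀) → (∃ v ∈ V, η' = v +ᵥ η₀) →
      S η = S η' - (1/2 : ℝ) * θ η (η -ᵥ η') - (1/2 : ℝ) * θ η' (η -ᵥ η'))
    (η : A) (hη : ∃ v ∈ V, η = v +ᵥ η₀)
    (ζ : A)
    (xR xI : H) (hxR : xR ∈ V) (hxI : xI ∈ V)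
    (hxdec : ζ -ᵥ η = xR + Complex.I • xI)
    (ζR : A) (hζR : ∃ v ∈ V, ζR = v +ᵥ η₀)
    (ζI : H) (hζI : ζI ∈ V)
    (hζdec : ζ = (Complex.I • ζI) +ᵥ ζR) :
    Complex.exp (Complex.I * ((S η : ℝ) : ℂ)
        - Complex.I * ((θ η (ζ -ᵥ η) : ℝ) : ℂ)
        - (Complex.I / 2) * ((B (ζ -ᵥ η) (ζ -ᵥ η) : ℝ) : ℂ)
        - (1/2 : ℂ) * (((inner ℂ xI xI : ℂ).re : ℝ) : ℂ)
        - (Complex.I / 2) * (((inner ℂ xR xI : ℂ).re : ℝ) : ℂ))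
      = Complex.exp (Complex.I * ((S ζR : ℝ) : ℂ)
        - Complex.I * ((θ ζR (Complex.I • ζI) : ℝ) : ℂ)
        - (Complex.I / 2) * ((B (Complex.I • ζI) (Complex.I • ζI) : ℝ) : ℂ)
        - (1/2 : ℂ) * (((inner ℂ ζI ζI : ℂ).re : ℝ) : ℂ)) := by
  -- ζR - η ∈ V
  have ha : ζR -ᵥ η ∈ V := by
    obtain ⟨v, hv, hveq⟩ := hη
    obtain ⟨w, hw, hweq⟩ := hζR
    have h : ζR -ᵥ η = w - v := by
      rw [hveq, hweq, vadd_vsub_vadd_cancel_right]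
    rw [h]; exact V.sub_mem hw hv
  have hkey : xR + Complex.I • xI = Complex.I • ζI + (ζR -ᵥ η) := by
    rw [← hxdec, hζdec, vadd_vsub_assoc]
  -- show ζI = xI and ζR -ᵥ η = xR
  have hc : Complex.I • (xI - ζI) = (ζR -ᵥ η) - xR := by
    rw [smul_sub, sub_eq_sub_iff_add_eq_add, add_comm (Complex.I • xI) xR,
      add_comm (ζR -ᵥ η) (Complex.I • ζI)]
    exact hkey
  have hcV : xI - ζI ∈ V := V.sub_mem hxI hζI
  have hicV : Complex.I • (xI - ζI) ∈ V := by
    rw [hc]; exact V.sub_mem ha hxR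
  have hc0 : xI - ζI = 0 := by
    have h0 := (hVlag _).mp hicV _ hcV
    rw [inner_smul_left, Complex.conj_I, inner_self_eq_norm_sq_to_K] at h0
    simp at h0
    simpa [← Complex.ofReal_pow, sub_eq_zero, pow_eq_zero_iff, norm_eq_zero] using h0
  have hζIeq : ζI = xI := (sub_eq_zero.mp hc0).symm
  rw [hζIeq] at hζI hζdec ⊢
  have haR : ζR -ᵥ η = xR := by
    rw [hc0, smul_zero] at hc
    exact (sub_eq_zero.mp hc.symm)
  have hζRη : ζR = xR +ᵥ η := by
    rw [← haR, vsub_vadd]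
  -- the S relation
  have hSrel := hS ζR η hζR hη
  rw [haR] at hSrel
  -- θ ζR expansions
  have hθR : ∀ x : H, θ ζR x = θ η x + B xR x := by
    intro x; rw [hζRη]; exact hθB η xR x
  rw [hθR xR] at hSrel
  -- expand θ η (ζ -ᵥ η)
  have hθexp : θ η (ζ -ᵥ η) = θ η xR + θ η (Complex.I • xI) := by
    rw [hxdec]; exact (hθ η).map_add _ _
  -- expand B (ζ -ᵥ η) (ζ -ᵥ η)
  have hBexp : B (ζ -ᵥ η) (ζ -ᵥ η)
      = B xR xR + B xR (Complex.I • xI) + B (Complex.I • xI) xR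
        + B (Complex.I • xI) (Complex.I • xI) := by
    rw [hxdec, (hB₁ _).map_add, (hB₂ _).map_add, (hB₂ _).map_add]
    ring
  -- ω relation
  have hω := hωB xR (Complex.I • xI)
  have hIm : (inner ℂ xR (Complex.I • xI) : ℂ).im = (inner ℂ xR xI : ℂ).re := by
    rw [inner_smul_right]; simp [Complex.mul_im]
  rw [hIm] at hω
  -- the real identity
  have hreal : S η - θ η (ζ -ᵥ η) - (1/2 : ℝ) * B (ζ -ᵥ η) (ζ -ᵥ η)
      - (1/2 : ℝ) * (inner ℂ xR xI : ℂ).re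
      = S ζR - θ ζR (Complex.I • xI)
        - (1/2 : ℝ) * B (Complex.I • xI) (Complex.I • xI) := by
    rw [hθexp, hBexp, hSrel, hθR (Complex.I • xI)]
    linarith [hω]
  have hC := congrArg (fun r : ℝ => (r : ℂ)) hreal
  push_cast at hC
  congr 1
  linear_combination Complex.I * hC
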